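/- Let φ : M₃(ℂ) → M₃(ℂ) be the map determined by parameters b₁, b₂, c₁, c₂ ∈ ℂ and δ₁, δ₂, σ₁, σ₂ ≥ 0, with ε_i = |b_i| + |c_i|, given by φ(X) = [[(ε₁²+δ₁²)x₁₁ + σ₂²x₂₂, 0, b₁x₁₃ + c₁x₃₁], [0, (ε₂²+δ₂²)x₂₂ + σ₁²x₁₁, b₂x₂₃ + c₂x₃₂], [conj(b₁)x₃₁ + conj(c₁)x₁₃, conj(b₂)x₃₂ + conj(c₂)x₂₃, x₃₃]] for X = (x_{ij}) ∈ M₃(ℂ). Then φ is a positive map if and only if σ₁σ₂ + δ₁δ₂ ≥ ε₁ε₂. -/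

import Mathlib

set_option maxHeartbeats 800000


open scoped ComplexOrder
open Matrix

noncomputable section
namespace Paper

/-- A map between matrix algebras is positive if it sends positive semidefinite
matrices to positive semidefinite matrices. -/
def IsPosMap {m n : Type*} [Fintype m] [Fintype n]
    (φ : Matrix m m ℂ → Matrix n n ℂ) : Prop :=
  ∀ X : Matrix m m ℂ, X.PosSemidef → (φ X).PosSemidef

/-- The rank one operator `ηη*`, i.e. `ζ ↦ ⟨η, ζ⟩ η`. -/
def rankOne {m : Type*} (η : m → ℂ) : Matrix m m ℂ :=
  Matrix.vecMulVec η (star η)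

/-- The Choi matrix `∑ E_{ij} ⊗ φ(E_{ij})` of a map `φ`. -/
def choi {m n : Type*} [Fintype m] [DecidableEq m]
    (φ : Matrix m m ℂ → Matrix n n ℂ) : Matrix (m × n) (m × n) ℂ :=
  Matrix.of fun p q => φ (Matrix.single p.1 q.1 1) p.2 q.2

/-- A map is completely positive iff its Choi matrix is positive semidefinite. -/
def IsCP {m n : Type*} [Fintype m] [DecidableEq m] [Fintype n]
    (φ : Matrix m m ℂ → Matrix n n ℂ) : Prop :=
  (choi φ).PosSemidef

/-- A map is completely copositive iff `X ↦ φ(Xᵀ)` is completely positive. -/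
def IsCCP {m n : Type*} [Fintype m] [DecidableEq m] [Fintype n]
    (φ : Matrix m m ℂ → Matrix n n ℂ) : Prop :=
  IsCP fun X => φ Xᵀ

/-- A map is decomposable iff it is the sum of a completely positive and a
completely copositive (linear) map. -/
def Decomposable {m n : Type*} [Fintype m] [DecidableEq m] [Fintype n]
    (φ : Matrix m m ℂ → Matrix n n ℂ) : Prop :=
  ∃ φ₁ φ₂ : Matrix m m ℂ →ₗ[ℂ] Matrix n n ℂ,
    IsCP (⇑φ₁) ∧ IsCCP (⇑φ₂) ∧ ∀ X, φ X = φ₁ X + φ₂ X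

/-- The ampliation `id_{M₂(ℂ)} ⊗ φ`. -/
def ampl2 {m n : Type*} (φ : Matrix m m ℂ → Matrix n n ℂ)
    (Y : Matrix (Fin 2 × m) (Fin 2 × m) ℂ) : Matrix (Fin 2 × n) (Fin 2 × n) ℂ :=
  Matrix.of fun p q => φ (Matrix.of fun a b => Y (p.1, a) (q.1, b)) p.2 q.2

/-- The ampliation `tran_{M₂(ℂ)} ⊗ φ`. -/
def ampl2T {m n : Type*} (φ : Matrix m m ℂ → Matrix n n ℂ)
    (Y : Matrix (Fin 2 × m) (Fin 2 × m) ℂ) : Matrix (Fin 2 × n) (Fin 2 × n) ℂ :=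
  Matrix.of fun p q => φ (Matrix.of fun a b => Y (q.1, a) (p.1, b)) p.2 q.2

/-- `φ` is 2-positive if `id_{M₂(ℂ)} ⊗ φ` is positive. -/
def Is2Pos {m n : Type*} [Fintype m] [Fintype n]
    (φ : Matrix m m ℂ → Matrix n n ℂ) : Prop :=
  IsPosMap (ampl2 φ)

/-- `φ` is 2-copositive if `tran_{M₂(ℂ)} ⊗ φ` is positive. -/
def Is2Copos {m n : Type*} [Fintype m] [Fintype n]
    (φ : Matrix m m ℂ → Matrix n n ℂ) : Prop :=
  IsPosMap (ampl2T φ)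

/-- A positive map `φ` is exposed if every positive (linear) map `ψ` vanishing
(in the sense `⟨y, ψ(ηη*) y⟩ = 0`) wherever `φ` vanishes is a nonnegative
multiple of `φ`. -/
def IsExposed {m n : Type*} [Fintype m] [Fintype n]
    (φ : Matrix m m ℂ → Matrix n n ℂ) : Prop :=
  IsPosMap φ ∧
    ∀ ψ : Matrix m m ℂ →ₗ[ℂ] Matrix n n ℂ, IsPosMap ⇑ψ →
      (∀ (η : m → ℂ) (y : n → ℂ),
        star y ⬝ᵥ (φ (rankOne η)).mulVec y = 0 →
          star y ⬝ᵥ (ψ (rankOne η)).mulVec y = 0) →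
      ∃ c : ℝ, 0 ≤ c ∧ ∀ X, ψ X = (c : ℂ) • φ X

/-- A positive map `φ` is optimal if there is no nonzero completely positive map
`ψ` with `φ − ψ` positive. -/
def IsOptimal {m n : Type*} [Fintype m] [DecidableEq m] [Fintype n]
    (φ : Matrix m m ℂ → Matrix n n ℂ) : Prop :=
  ¬∃ ψ : Matrix m m ℂ →ₗ[ℂ] Matrix n n ℂ,
      ψ ≠ 0 ∧ IsCP (⇑ψ) ∧ IsPosMap fun X => φ X - ψ X

/-- The index type of the direct sum `ℂᵃ ⊕ ℂᵇ ⊕ ℂ`. -/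
abbrev TI (a b : ℕ) := Fin a ⊕ (Fin b ⊕ Unit)

/-- The index of the distinguished one-dimensional summand. -/
def tidx {a b : ℕ} : TI a b := Sum.inr (Sum.inr ())

/-- Block `X₁₁` of a matrix on `ℂᵃ ⊕ ℂᵇ ⊕ ℂ`. -/
def blk11 {a b : ℕ} (X : Matrix (TI a b) (TI a b) ℂ) : Matrix (Fin a) (Fin a) ℂ :=
  Matrix.of fun i j => X (Sum.inl i) (Sum.inl j)

/-- Block `X₂₂`. -/
def blk22 {a b : ℕ} (X : Matrix (TI a b) (TI a b) ℂ) : Matrix (Fin b) (Fin b) ℂ :=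
  Matrix.of fun i j => X (Sum.inr (Sum.inl i)) (Sum.inr (Sum.inl j))

/-- Block `X₁₃`, viewed as a column vector. -/
def blk13 {a b : ℕ} (X : Matrix (TI a b) (TI a b) ℂ) : Fin a → ℂ :=
  fun i => X (Sum.inl i) tidx

/-- Block `X₃₁` (equivalently, the vector `X₃₁ᵀ`). -/
def blk31 {a b : ℕ} (X : Matrix (TI a b) (TI a b) ℂ) : Fin a → ℂ :=
  fun i => X tidx (Sum.inl i)

/-- Block `X₂₃`, viewed as a column vector. -/
def blk23 {a b : ℕ} (X : Matrix (TI a b) (TI a b) ℂ) : Fin b → ℂ :=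
  fun i => X (Sum.inr (Sum.inl i)) tidx

/-- Block `X₃₂` (equivalently, the vector `X₃₂ᵀ`). -/
def blk32 {a b : ℕ} (X : Matrix (TI a b) (TI a b) ℂ) : Fin b → ℂ :=
  fun i => X tidx (Sum.inr (Sum.inl i))

/-- `P` is the orthogonal projection onto the range of `A`: it is Hermitian,
idempotent, and has the same range as `A`. -/
def IsOrthProjOnRange {n m : Type*} [Fintype n] [Fintype m]
    (P : Matrix n n ℂ) (A : Matrix n m ℂ) : Prop :=
  P.IsHermitian ∧ P * P = P ∧
    LinearMap.range P.mulVecLin = LinearMap.range A.mulVecLin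

/-- The merging of the maps `φ₁`, `φ₂` by means of the operators `B₁, C₁, B₂, C₂`,
the functionals `ω₁, ω₂`, with `P₁, P₂` the orthogonal projections onto the ranges
of `φ₁(1)`, `φ₂(1)`. -/
def merging {k₁ k₂ h₁ h₂ : ℕ}
    (φ₁ : Matrix (Fin k₁) (Fin k₁) ℂ →ₗ[ℂ] Matrix (Fin h₁) (Fin h₁) ℂ)
    (φ₂ : Matrix (Fin k₂) (Fin k₂) ℂ →ₗ[ℂ] Matrix (Fin h₂) (Fin h₂) ℂ)
    (B₁ C₁ : Matrix (Fin h₁) (Fin k₁) ℂ) (B₂ C₂ : Matrix (Fin h₂) (Fin k₂) ℂ)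
    (ω₁ : Matrix (Fin k₁) (Fin k₁) ℂ →ₗ[ℂ] ℂ) (ω₂ : Matrix (Fin k₂) (Fin k₂) ℂ →ₗ[ℂ] ℂ)
    (P₁ : Matrix (Fin h₁) (Fin h₁) ℂ) (P₂ : Matrix (Fin h₂) (Fin h₂) ℂ)
    (X : Matrix (TI k₁ k₂) (TI k₁ k₂) ℂ) : Matrix (TI h₁ h₂) (TI h₁ h₂) ℂ :=
  Matrix.of fun p q =>
    match p, q with
    | Sum.inl a, Sum.inl b => φ₁ (blk11 X) a b + ω₂ (blk22 X) * P₁ a b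
    | Sum.inl _, Sum.inr (Sum.inl _) => 0
    | Sum.inl a, Sum.inr (Sum.inr _) => (B₁.mulVec (blk13 X) + C₁.mulVec (blk31 X)) a
    | Sum.inr (Sum.inl _), Sum.inl _ => 0
    | Sum.inr (Sum.inl a), Sum.inr (Sum.inl b) => φ₂ (blk22 X) a b + ω₁ (blk11 X) * P₂ a b
    | Sum.inr (Sum.inl a), Sum.inr (Sum.inr _) => (B₂.mulVec (blk23 X) + C₂.mulVec (blk32 X)) a
    | Sum.inr (Sum.inr _), Sum.inl b =>
        (Matrix.vecMul (blk31 X) B₁ᴴ + Matrix.vecMul (blk13 X) C₁ᴴ) b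
    | Sum.inr (Sum.inr _), Sum.inr (Sum.inl b) =>
        (Matrix.vecMul (blk32 X) B₂ᴴ + Matrix.vecMul (blk23 X) C₂ᴴ) b
    | Sum.inr (Sum.inr _), Sum.inr (Sum.inr _) => X tidx tidx

/-- The quantity `μᵢ(η, y) = √⟨y, φᵢ(ηη*) y⟩`. -/
def muQ {k h : ℕ} (φ : Matrix (Fin k) (Fin k) ℂ →ₗ[ℂ] Matrix (Fin h) (Fin h) ℂ)
    (η : Fin k → ℂ) (y : Fin h → ℂ) : ℝ :=
  Real.sqrt (star y ⬝ᵥ (φ (rankOne η)).mulVec y).re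

/-- The quantity `εᵢ(η, y) = |⟨y, Bη⟩| + |⟨y, C η̄⟩|`. -/
def epsQ {k h : ℕ} (B C : Matrix (Fin h) (Fin k) ℂ) (η : Fin k → ℂ) (y : Fin h → ℂ) : ℝ :=
  ‖(star y ⬝ᵥ B.mulVec η)‖ + ‖(star y ⬝ᵥ C.mulVec (star η))‖

/-- The quantity `δᵢ(η, y) = √(μᵢ(η,y)² − εᵢ(η,y)²)`. -/
def deltaQ {k h : ℕ} (φ : Matrix (Fin k) (Fin k) ℂ →ₗ[ℂ] Matrix (Fin h) (Fin h) ℂ)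
    (B C : Matrix (Fin h) (Fin k) ℂ) (η : Fin k → ℂ) (y : Fin h → ℂ) : ℝ :=
  Real.sqrt (muQ φ η y ^ 2 - epsQ B C η y ^ 2)

/-- The quantity `σᵢ(η, y) = √(ωᵢ(ηη*))·‖P y‖`. -/
def sigmaQ {k h : ℕ} (ω : Matrix (Fin k) (Fin k) ℂ →ₗ[ℂ] ℂ)
    (P : Matrix (Fin h) (Fin h) ℂ) (η : Fin k → ℂ) (y : Fin h → ℂ) : ℝ :=
  Real.sqrt (ω (rankOne η)).re * Real.sqrt (star (P.mulVec y) ⬝ᵥ P.mulVec y).re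

/-- The map `M₃(ℂ) → M₃(ℂ)` determined by `b₁, b₂, c₁, c₂ ∈ ℂ` and
`δ₁, δ₂, σ₁, σ₂ ≥ 0`, with `εᵢ = |bᵢ| + |cᵢ|`. -/
def phi3 (b₁ b₂ c₁ c₂ : ℂ) (δ₁ δ₂ σ₁ σ₂ : ℝ) (X : Matrix (Fin 3) (Fin 3) ℂ) :
    Matrix (Fin 3) (Fin 3) ℂ :=
  !![(((‖b₁‖ + ‖c₁‖) ^ 2 + δ₁ ^ 2 : ℝ) : ℂ) * X 0 0 +
        ((σ₂ ^ 2 : ℝ) : ℂ) * X 1 1,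
      0, b₁ * X 0 2 + c₁ * X 2 0;
    0,
      (((‖b₂‖ + ‖c₂‖) ^ 2 + δ₂ ^ 2 : ℝ) : ℂ) * X 1 1 +
        ((σ₁ ^ 2 : ℝ) : ℂ) * X 0 0,
      b₂ * X 1 2 + c₂ * X 2 1;
    (starRingEnd ℂ) b₁ * X 2 0 + (starRingEnd ℂ) c₁ * X 0 2,
      (starRingEnd ℂ) b₂ * X 2 1 + (starRingEnd ℂ) c₂ * X 1 2, X 2 2]
section Statement15Aux

lemma key_scalar (e₁ e₂ δ₁ δ₂ σ₁ σ₂ s t u p q z m₁ m₂ : ℝ)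
    (he₁ : 0 ≤ e₁) (he₂ : 0 ≤ e₂) (hs : 0 ≤ s) (ht : 0 ≤ t)
    (hp : 0 ≤ p) (hq : 0 ≤ q) (hz : 0 ≤ z)
    (hm₁u : m₁ ≤ s * u) (hm₂u : m₂ ≤ t * u)
    (hkey : e₁ * e₂ ≤ σ₁ * σ₂ + δ₁ * δ₂) :
    2 * e₁ * m₁ * p * z + 2 * e₂ * m₂ * q * z ≤
      (e₁ ^ 2 + δ₁ ^ 2) * s ^ 2 * p ^ 2 + σ₂ ^ 2 * t ^ 2 * p ^ 2 +
        (e₂ ^ 2 + δ₂ ^ 2) * t ^ 2 * q ^ 2 + σ₁ ^ 2 * s ^ 2 * q ^ 2 + u ^ 2 * z ^ 2 := by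
  nlinarith [sq_nonneg (u * z - e₁ * s * p - e₂ * t * q), sq_nonneg (δ₁ * s * p - δ₂ * t * q),
    sq_nonneg (σ₂ * t * p - σ₁ * s * q),
    mul_nonneg (mul_nonneg (mul_nonneg (sub_nonneg.2 hkey) hs) ht) (mul_nonneg hp hq),
    mul_nonneg (mul_nonneg (mul_nonneg he₁ (sub_nonneg.2 hm₁u)) hp) hz,
    mul_nonneg (mul_nonneg (mul_nonneg he₂ (sub_nonneg.2 hm₂u)) hq) hz,
    mul_nonneg hs ht, mul_nonneg hp hq]

lemma quad_eq (b₁ b₂ c₁ c₂ : ℂ) (δ₁ δ₂ σ₁ σ₂ : ℝ) (X : Matrix (Fin 3) (Fin 3) ℂ)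
    (y : Fin 3 → ℂ) :
    star y ⬝ᵥ (phi3 b₁ b₂ c₁ c₂ δ₁ δ₂ σ₁ σ₂ X).mulVec y =
      ((((‖b₁‖ + ‖c₁‖) ^ 2 + δ₁ ^ 2 : ℝ) : ℂ) * X 0 0 +
          ((σ₂ ^ 2 : ℝ) : ℂ) * X 1 1) * (starRingEnd ℂ (y 0) * y 0) +
        ((((‖b₂‖ + ‖c₂‖) ^ 2 + δ₂ ^ 2 : ℝ) : ℂ) * X 1 1 +
          ((σ₁ ^ 2 : ℝ) : ℂ) * X 0 0) * (starRingEnd ℂ (y 1) * y 1) +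
        X 2 2 * (starRingEnd ℂ (y 2) * y 2) +
        (b₁ * X 0 2 + c₁ * X 2 0) * (starRingEnd ℂ (y 0) * y 2) +
        (starRingEnd ℂ b₁ * X 2 0 + starRingEnd ℂ c₁ * X 0 2) * (starRingEnd ℂ (y 2) * y 0) +
        (b₂ * X 1 2 + c₂ * X 2 1) * (starRingEnd ℂ (y 1) * y 2) +
        (starRingEnd ℂ b₂ * X 2 1 + starRingEnd ℂ c₂ * X 1 2) * (starRingEnd ℂ (y 2) * y 1) := by
  simp [phi3, Matrix.mulVec, dotProduct, Fin.sum_univ_three]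
  ring

lemma diag_re_nonneg {n : Type*} [Fintype n] [DecidableEq n]
    {X : Matrix n n ℂ} (hX : X.PosSemidef) (i : n) :
    0 ≤ (X i i).re := by
  have h := hX.re_dotProduct_nonneg (Pi.single i 1)
  simpa [dotProduct, Matrix.mulVec, Pi.single_apply] using h

lemma diag_im_zero {n : Type*} [Fintype n] {X : Matrix n n ℂ} (hX : X.IsHermitian) (i : n) :
    (X i i).im = 0 := by
  have h := hX.apply i i
  rw [Complex.star_def, Complex.conj_eq_iff_im] at h
  exact h

lemma entry02 {X : Matrix (Fin 3) (Fin 3) ℂ} (hX : X.PosSemidef) :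
    ‖X 0 2‖ ^ 2 ≤ (X 0 0).re * (X 2 2).re := by
  have hji : X 2 0 = starRingEnd ℂ (X 0 2) := by rw [← hX.1.apply 0 2]; simp
  set m : ℝ := ‖X 0 2‖ with hm
  have hmnn : (0:ℝ) ≤ m := norm_nonneg _
  have hmc : X 0 2 * starRingEnd ℂ (X 0 2) = (m:ℂ)^2 := by
    rw [Complex.mul_conj]; norm_cast; rw [hm, Complex.sq_norm]
  have key : ∀ τ : ℝ, 0 ≤ ((X 0 0).re * m ^ 2) * (τ * τ) + (-2 * m ^ 2) * τ + (X 2 2).re := by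
    intro τ
    have h := hX.dotProduct_mulVec_nonneg ![-(τ:ℂ) * X 0 2, 0, 1]
    rw [Complex.le_def] at h
    have hQ : star ![-(τ:ℂ) * X 0 2, 0, 1] ⬝ᵥ X *ᵥ ![-(τ:ℂ) * X 0 2, 0, 1] =
        ((m ^ 2 * (τ * τ) : ℝ) : ℂ) * X 0 0 - ((2 * m ^ 2 * τ : ℝ) : ℂ) + X 2 2 := by
      simp only [dotProduct, Matrix.mulVec, Fin.sum_univ_three, hji,
        Matrix.cons_val_zero, Matrix.cons_val_one, Matrix.head_cons,
        Matrix.cons_val_two, Matrix.tail_cons, Pi.star_apply, Complex.star_def,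
        _root_.map_mul, map_neg, map_zero, _root_.map_one, Complex.conj_ofReal]
      push_cast
      linear_combination ((τ:ℂ) * τ * X 0 0 - 2 * τ) * hmc
    rw [hQ] at h
    have h1 := h.1
    simp only [Complex.add_re, Complex.sub_re, Complex.mul_re, Complex.ofReal_re,
      Complex.ofReal_im, Complex.zero_re, zero_mul, sub_zero] at h1 ⊢
    linarith
  have hd := discrim_le_zero key
  have h0 := diag_re_nonneg hX 0
  have h2 := diag_re_nonneg hX 2
  rw [discrim] at hd
  rcases eq_or_lt_of_le hmnn with h | h
  · rw [← h]; simpa using mul_nonneg h0 h2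
  · nlinarith [hd, mul_pos h h]

lemma entry12 {X : Matrix (Fin 3) (Fin 3) ℂ} (hX : X.PosSemidef) :
    ‖X 1 2‖ ^ 2 ≤ (X 1 1).re * (X 2 2).re := by
  have hji : X 2 1 = starRingEnd ℂ (X 1 2) := by rw [← hX.1.apply 1 2]; simp
  set m : ℝ := ‖X 1 2‖ with hm
  have hmnn : (0:ℝ) ≤ m := norm_nonneg _
  have hmc : X 1 2 * starRingEnd ℂ (X 1 2) = (m:ℂ)^2 := by
    rw [Complex.mul_conj]; norm_cast; rw [hm, Complex.sq_norm]
  have key : ∀ τ : ℝ, 0 ≤ ((X 1 1).re * m ^ 2) * (τ * τ) + (-2 * m ^ 2) * τ + (X 2 2).re := by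
    intro τ
    have h := hX.dotProduct_mulVec_nonneg ![0, -(τ:ℂ) * X 1 2, 1]
    rw [Complex.le_def] at h
    have hQ : star ![0, -(τ:ℂ) * X 1 2, 1] ⬝ᵥ X *ᵥ ![0, -(τ:ℂ) * X 1 2, 1] =
        ((m ^ 2 * (τ * τ) : ℝ) : ℂ) * X 1 1 - ((2 * m ^ 2 * τ : ℝ) : ℂ) + X 2 2 := by
      simp only [dotProduct, Matrix.mulVec, Fin.sum_univ_three, hji,
        Matrix.cons_val_zero, Matrix.cons_val_one, Matrix.head_cons,
        Matrix.cons_val_two, Matrix.tail_cons, Pi.star_apply, Complex.star_def,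
        _root_.map_mul, map_neg, map_zero, _root_.map_one, Complex.conj_ofReal]
      push_cast
      linear_combination ((τ:ℂ) * τ * X 1 1 - 2 * τ) * hmc
    rw [hQ] at h
    have h1 := h.1
    simp only [Complex.add_re, Complex.sub_re, Complex.mul_re, Complex.ofReal_re,
      Complex.ofReal_im, Complex.zero_re, zero_mul, sub_zero] at h1 ⊢
    linarith
  have hd := discrim_le_zero key
  have h1 := diag_re_nonneg hX 1
  have h2 := diag_re_nonneg hX 2
  rw [discrim] at hd
  rcases eq_or_lt_of_le hmnn with h | h
  · rw [← h]; simpa using mul_nonneg h1 h2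
  · nlinarith [hd, mul_pos h h]


lemma backward (b₁ b₂ c₁ c₂ : ℂ) (δ₁ δ₂ σ₁ σ₂ : ℝ)
    (hδ₁ : 0 ≤ δ₁) (hδ₂ : 0 ≤ δ₂) (hσ₁ : 0 ≤ σ₁) (hσ₂ : 0 ≤ σ₂)
    (hkey : (‖b₁‖ + ‖c₁‖) * (‖b₂‖ + ‖c₂‖) ≤
        σ₁ * σ₂ + δ₁ * δ₂) :
    IsPosMap (phi3 b₁ b₂ c₁ c₂ δ₁ δ₂ σ₁ σ₂) := by
  intro X hX
  set e₁ : ℝ := ‖b₁‖ + ‖c₁‖ with he₁def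
  set e₂ : ℝ := ‖b₂‖ + ‖c₂‖ with he₂def
  have he₁ : 0 ≤ e₁ := by positivity
  have he₂ : 0 ≤ e₂ := by positivity
  have hc : ∀ i j, starRingEnd ℂ (X i j) = X j i := fun i j => hX.1.apply j i
  have h00 : (X 0 0).im = 0 := diag_im_zero hX.1 0
  have h11 : (X 1 1).im = 0 := diag_im_zero hX.1 1
  have h22 : (X 2 2).im = 0 := diag_im_zero hX.1 2
  refine Matrix.PosSemidef.of_dotProduct_mulVec_nonneg ?_ ?_
  · -- Hermitian
    ext i j
    fin_cases i <;> fin_cases j <;>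
      simp [phi3, Matrix.conjTranspose_apply, _root_.map_mul, map_add,
        Complex.conj_ofReal, hc, Complex.conj_eq_iff_im.2, h00, h11, h22] <;>
      ring
  · intro y
    rw [quad_eq]
    -- abbreviations
    set a : ℝ := (X 0 0).re with hadef
    set bb : ℝ := (X 1 1).re with hbbdef
    set c : ℝ := (X 2 2).re with hcdef
    have hXa : X 0 0 = (a : ℂ) := by apply Complex.ext <;> simp [h00, hadef]
    have hXb : X 1 1 = (bb : ℂ) := by apply Complex.ext <;> simp [h11, hbbdef]
    have hXc : X 2 2 = (c : ℂ) := by apply Complex.ext <;> simp [h22, hcdef]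
    have h20 : X 2 0 = starRingEnd ℂ (X 0 2) := (hc 0 2).symm
    have h21 : X 2 1 = starRingEnd ℂ (X 1 2) := (hc 1 2).symm
    set w₁ : ℂ := b₁ * X 0 2 + c₁ * starRingEnd ℂ (X 0 2) with hw₁def
    set w₂ : ℂ := b₂ * X 1 2 + c₂ * starRingEnd ℂ (X 1 2) with hw₂def
    set z₁ : ℂ := w₁ * (starRingEnd ℂ (y 0) * y 2) with hz₁def
    set z₂ : ℂ := w₂ * (starRingEnd ℂ (y 1) * y 2) with hz₂def
    set p : ℝ := ‖y 0‖ with hpdef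
    set q : ℝ := ‖y 1‖ with hqdef
    set z : ℝ := ‖y 2‖ with hzdef
    have hy0 : starRingEnd ℂ (y 0) * y 0 = ((p ^ 2 : ℝ) : ℂ) := by
      rw [mul_comm, Complex.mul_conj]; norm_cast; rw [hpdef, Complex.sq_norm]
    have hy1 : starRingEnd ℂ (y 1) * y 1 = ((q ^ 2 : ℝ) : ℂ) := by
      rw [mul_comm, Complex.mul_conj]; norm_cast; rw [hqdef, Complex.sq_norm]
    have hy2 : starRingEnd ℂ (y 2) * y 2 = ((z ^ 2 : ℝ) : ℂ) := by
      rw [mul_comm, Complex.mul_conj]; norm_cast; rw [hzdef, Complex.sq_norm]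
    have hcross1 : (starRingEnd ℂ b₁ * X 2 0 + starRingEnd ℂ c₁ * X 0 2) *
        (starRingEnd ℂ (y 2) * y 0) = starRingEnd ℂ z₁ := by
      rw [h20, hz₁def, hw₁def]
      simp only [map_add, _root_.map_mul, Complex.conj_conj]
      ring
    have hcross2 : (starRingEnd ℂ b₂ * X 2 1 + starRingEnd ℂ c₂ * X 1 2) *
        (starRingEnd ℂ (y 2) * y 1) = starRingEnd ℂ z₂ := by
      rw [h21, hz₂def, hw₂def]
      simp only [map_add, _root_.map_mul, Complex.conj_conj]
      ring
    have hQ : ((((e₁ ^ 2 + δ₁ ^ 2 : ℝ)) : ℂ) * X 0 0 +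
          ((σ₂ ^ 2 : ℝ) : ℂ) * X 1 1) * (starRingEnd ℂ (y 0) * y 0) +
        ((((e₂ ^ 2 + δ₂ ^ 2 : ℝ)) : ℂ) * X 1 1 +
          ((σ₁ ^ 2 : ℝ) : ℂ) * X 0 0) * (starRingEnd ℂ (y 1) * y 1) +
        X 2 2 * (starRingEnd ℂ (y 2) * y 2) +
        (b₁ * X 0 2 + c₁ * X 2 0) * (starRingEnd ℂ (y 0) * y 2) +
        (starRingEnd ℂ b₁ * X 2 0 + starRingEnd ℂ c₁ * X 0 2) * (starRingEnd ℂ (y 2) * y 0) +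
        (b₂ * X 1 2 + c₂ * X 2 1) * (starRingEnd ℂ (y 1) * y 2) +
        (starRingEnd ℂ b₂ * X 2 1 + starRingEnd ℂ c₂ * X 1 2) * (starRingEnd ℂ (y 2) * y 1) =
        (((e₁ ^ 2 + δ₁ ^ 2) * a * p ^ 2 + σ₂ ^ 2 * bb * p ^ 2 +
          (e₂ ^ 2 + δ₂ ^ 2) * bb * q ^ 2 + σ₁ ^ 2 * a * q ^ 2 + c * z ^ 2 +
          2 * z₁.re + 2 * z₂.re : ℝ) : ℂ) := by
      rw [hcross1, hcross2, hy0, hy1, hy2, hXa, hXb, hXc, h20, h21]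
      rw [show (b₁ * X 0 2 + c₁ * starRingEnd ℂ (X 0 2)) * (starRingEnd ℂ (y 0) * y 2) = z₁
        from rfl]
      rw [show (b₂ * X 1 2 + c₂ * starRingEnd ℂ (X 1 2)) * (starRingEnd ℂ (y 1) * y 2) = z₂
        from rfl]
      have e1 : z₁ + starRingEnd ℂ z₁ = 2 * ((z₁.re : ℝ) : ℂ) := by
        rw [Complex.add_conj]; push_cast; ring
      have e2 : z₂ + starRingEnd ℂ z₂ = 2 * ((z₂.re : ℝ) : ℂ) := by
        rw [Complex.add_conj]; push_cast; ring
      push_cast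
      linear_combination e1 + e2
    rw [hQ, Complex.zero_le_real]
    -- now a real inequality
    set m₁ : ℝ := ‖X 0 2‖ with hm₁def
    set m₂ : ℝ := ‖X 1 2‖ with hm₂def
    have ha : 0 ≤ a := diag_re_nonneg hX 0
    have hbb : 0 ≤ bb := diag_re_nonneg hX 1
    have hcc : 0 ≤ c := diag_re_nonneg hX 2
    have hp : 0 ≤ p := norm_nonneg _
    have hq : 0 ≤ q := norm_nonneg _
    have hz : 0 ≤ z := norm_nonneg _
    have hm₁ : 0 ≤ m₁ := norm_nonneg _
    have hm₂ : 0 ≤ m₂ := norm_nonneg _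
    have hw₁abs : ‖w₁‖ ≤ e₁ * m₁ := by
      calc ‖w₁‖ ≤ ‖b₁ * X 0 2‖ + ‖c₁ * starRingEnd ℂ (X 0 2)‖ :=
            norm_add_le _ _
        _ = e₁ * m₁ := by
            simp only [norm_mul, Complex.norm_conj]
            rw [he₁def]; ring
    have hw₂abs : ‖w₂‖ ≤ e₂ * m₂ := by
      calc ‖w₂‖ ≤ ‖b₂ * X 1 2‖ + ‖c₂ * starRingEnd ℂ (X 1 2)‖ :=
            norm_add_le _ _
        _ = e₂ * m₂ := by
            simp only [norm_mul, Complex.norm_conj]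
            rw [he₂def]; ring
    have hz₁re : -(e₁ * m₁ * p * z) ≤ z₁.re := by
      have h1 : -‖z₁‖ ≤ z₁.re := (abs_le.1 (Complex.abs_re_le_norm _)).1
      have h2 : ‖z₁‖ = ‖w₁‖ * p * z := by
        rw [hz₁def]; simp only [norm_mul, Complex.norm_conj]; rw [hpdef, hzdef]; ring
      have h3 : ‖w₁‖ * p * z ≤ e₁ * m₁ * p * z :=
        mul_le_mul_of_nonneg_right (mul_le_mul_of_nonneg_right hw₁abs hp) hz
      linarith
    have hz₂re : -(e₂ * m₂ * q * z) ≤ z₂.re := by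
      have h1 : -‖z₂‖ ≤ z₂.re := (abs_le.1 (Complex.abs_re_le_norm _)).1
      have h2 : ‖z₂‖ = ‖w₂‖ * q * z := by
        rw [hz₂def]; simp only [norm_mul, Complex.norm_conj]; rw [hqdef, hzdef]; ring
      have h3 : ‖w₂‖ * q * z ≤ e₂ * m₂ * q * z :=
        mul_le_mul_of_nonneg_right (mul_le_mul_of_nonneg_right hw₂abs hq) hz
      linarith
    -- square-root substitution
    set s : ℝ := Real.sqrt a with hsdef
    set t : ℝ := Real.sqrt bb with htdef
    set u : ℝ := Real.sqrt c with hudef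
    have hs : 0 ≤ s := Real.sqrt_nonneg _
    have ht : 0 ≤ t := Real.sqrt_nonneg _
    have hu : 0 ≤ u := Real.sqrt_nonneg _
    have hs2 : s ^ 2 = a := Real.sq_sqrt ha
    have ht2 : t ^ 2 = bb := Real.sq_sqrt hbb
    have hu2 : u ^ 2 = c := Real.sq_sqrt hcc
    have hm₁u : m₁ ≤ s * u := by
      have h1 : m₁ ^ 2 ≤ (s * u) ^ 2 := by
        rw [mul_pow, hs2, hu2]; exact entry02 hX
      exact le_of_pow_le_pow_left₀ two_ne_zero (mul_nonneg hs hu) h1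
    have hm₂u : m₂ ≤ t * u := by
      have h1 : m₂ ^ 2 ≤ (t * u) ^ 2 := by
        rw [mul_pow, ht2, hu2]; exact entry12 hX
      exact le_of_pow_le_pow_left₀ two_ne_zero (mul_nonneg ht hu) h1
    have hk := key_scalar e₁ e₂ δ₁ δ₂ σ₁ σ₂ s t u p q z m₁ m₂ he₁ he₂ hs ht hp hq hz
      hm₁u hm₂u hkey
    rw [hs2, ht2, hu2] at hk
    linarith



lemma unit_sqrt (ξ : ℂ) (hξ : ‖ξ‖ = 1) : ∃ μ : ℂ, ‖μ‖ = 1 ∧ μ ^ 2 = ξ := by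
  by_cases h : ξ = -1
  · exact ⟨Complex.I, by simp, by rw [Complex.I_sq, h]⟩
  · have h1 : (1 + ξ) ≠ 0 := by
      intro hc
      apply h
      linear_combination hc
    have ha0 : ‖1 + ξ‖ ≠ 0 := by simpa using h1
    refine ⟨(1 + ξ) / (‖1 + ξ‖ : ℂ), ?_, ?_⟩
    · rw [norm_div, Complex.norm_real, Real.norm_of_nonneg (norm_nonneg _), div_self ha0]
    · have hn : ξ * starRingEnd ℂ ξ = 1 := by
        rw [Complex.mul_conj]; norm_cast; rw [← Complex.sq_norm, hξ]; norm_num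
      have ha : ((‖1 + ξ‖ : ℝ) : ℂ) * ((‖1 + ξ‖ : ℝ) : ℂ) =
          (1 + ξ) * starRingEnd ℂ (1 + ξ) := by
        rw [Complex.mul_conj]; norm_cast; rw [← Complex.sq_norm]; ring
      simp only [map_add, _root_.map_one] at ha
      have hcast : ((‖1 + ξ‖ : ℝ) : ℂ) ≠ 0 := by
        simpa using ha0
      field_simp
      linear_combination (-ξ) * ha - (1 + ξ) * hn
lemma key_phase (b c : ℂ) : ∃ μ : ℂ, ‖μ‖ = 1 ∧
    ‖b * μ + c * starRingEnd ℂ μ‖ = ‖b‖ + ‖c‖ := by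
  by_cases hb : b = 0
  · exact ⟨1, by simp, by simp [hb]⟩
  by_cases hc : c = 0
  · exact ⟨1, by simp, by simp [hc]⟩
  · have habs : ‖starRingEnd ℂ b * c‖ ≠ 0 := by simp [hb, hc]
    obtain ⟨μ, hμ1, hμ2⟩ := unit_sqrt (starRingEnd ℂ b * c / (‖starRingEnd ℂ b * c‖ : ℂ))
      (by rw [norm_div, Complex.norm_real, Real.norm_of_nonneg (norm_nonneg _), div_self habs])
    refine ⟨μ, hμ1, ?_⟩
    have hμne : μ ≠ 0 := by
      intro h0; rw [h0] at hμ1; simp at hμ1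
    have hcabs : ‖c‖ ≠ 0 := by simpa using hc
    have hunit : μ * starRingEnd ℂ μ = 1 := by
      rw [Complex.mul_conj]; norm_cast; rw [← Complex.sq_norm, hμ1]; norm_num
    have hbb : b * starRingEnd ℂ b = ((‖b‖ : ℝ) : ℂ) ^ 2 := by
      rw [Complex.mul_conj]; norm_cast; rw [← Complex.sq_norm]
    have hsum : b * μ ^ 2 + c = ((‖b‖ / ‖c‖ + 1 : ℝ) : ℂ) * c := by
      rw [hμ2]
      have hA : ((‖starRingEnd ℂ b * c‖ : ℝ) : ℂ) =
          ((‖b‖ : ℝ) : ℂ) * ((‖c‖ : ℝ) : ℂ) := by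
        norm_cast; rw [norm_mul, Complex.norm_conj]
      rw [hA]
      have hb' : ((‖b‖ : ℝ) : ℂ) ≠ 0 := by simpa using hb
      have hc' : ((‖c‖ : ℝ) : ℂ) ≠ 0 := by simpa using hc
      rw [show b * (starRingEnd ℂ b * c / (((‖b‖ : ℝ) : ℂ) * ((‖c‖ : ℝ) : ℂ))) =
          (b * starRingEnd ℂ b) * c / (((‖b‖ : ℝ) : ℂ) * ((‖c‖ : ℝ) : ℂ)) by ring, hbb]
      push_cast
      field_simp
    have hfactor : b * μ + c * starRingEnd ℂ μ = starRingEnd ℂ μ * (b * μ ^ 2 + c) := by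
      linear_combination (-(b * μ)) * hunit
    rw [hfactor, norm_mul, Complex.norm_conj, hμ1, one_mul, hsum, norm_mul,
      Complex.norm_real, Real.norm_of_nonneg (by positivity : (0:ℝ) ≤ ‖b‖ / ‖c‖ + 1)]
    field_simp


lemma vecMulVec_posSemidef {n : Type*} [Fintype n] (η : n → ℂ) :
    (Matrix.vecMulVec η (star η)).PosSemidef := by
  refine Matrix.PosSemidef.of_dotProduct_mulVec_nonneg ?_ ?_
  · ext i j
    simp [Matrix.conjTranspose_apply, Matrix.vecMulVec_apply, mul_comm]
  · intro x
    set d : ℂ := star η ⬝ᵥ x with hd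
    have h1 : (Matrix.vecMulVec η (star η)) *ᵥ x = fun i => η i * d := by
      ext i
      simp only [Matrix.mulVec, dotProduct, Matrix.vecMulVec_apply, hd, Pi.star_apply,
        Finset.mul_sum]
      exact Finset.sum_congr rfl fun j _ => by ring
    have h3 : star x ⬝ᵥ η = starRingEnd ℂ d := by
      simp only [dotProduct, hd, map_sum, _root_.map_mul, Pi.star_apply,
        Complex.star_def, Complex.conj_conj]
      exact Finset.sum_congr rfl fun j _ => by ring
    have hQ : star x ⬝ᵥ (Matrix.vecMulVec η (star η)) *ᵥ x = starRingEnd ℂ d * d := by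
      rw [h1, ← h3]
      simp only [dotProduct, Finset.sum_mul, Pi.star_apply]
      exact Finset.sum_congr rfl fun j _ => by ring
    rw [hQ, mul_comm, Complex.mul_conj]
    norm_cast
    exact Complex.normSq_nonneg _

lemma choose_ab (d₁ d₂ M : ℝ) (h₁ : 0 ≤ d₁) (h₂ : 0 ≤ d₂) (hM : 2 * d₁ * d₂ < M) :
    ∃ a b : ℝ, 0 < a ∧ 0 < b ∧ d₁ ^ 2 * a ^ 2 + d₂ ^ 2 * b ^ 2 < M * a * b := by
  have hM0 : 0 < M := lt_of_le_of_lt (by positivity) hM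
  by_cases h : d₁ = 0
  · refine ⟨(d₂ ^ 2 + 1) / M, 1, by positivity, one_pos, ?_⟩
    rw [h]
    have : M * ((d₂ ^ 2 + 1) / M) = d₂ ^ 2 + 1 := by field_simp
    nlinarith [this]
  · have hd : 0 < d₁ := lt_of_le_of_ne h₁ (Ne.symm h)
    refine ⟨M / (2 * d₁ ^ 2), 1, by positivity, one_pos, ?_⟩
    have h4 : 4 * d₁ ^ 2 * d₂ ^ 2 < M ^ 2 := by
      have hQ : 0 < M + 2 * d₁ * d₂ := by positivity
      nlinarith [mul_pos (sub_pos.2 hM) hQ]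
    have hne : (2 * d₁ ^ 2) ≠ 0 := by positivity
    rw [div_pow]
    rw [show d₁ ^ 2 * (M ^ 2 / (2 * d₁ ^ 2) ^ 2) = M ^ 2 / (4 * d₁ ^ 2) by field_simp; ring]
    rw [show M * (M / (2 * d₁ ^ 2)) * 1 = M ^ 2 / (2 * d₁ ^ 2) by field_simp]
    rw [div_add' _ _ _ (by positivity : (4 * d₁ ^ 2) ≠ 0), div_lt_div_iff₀ (by positivity) (by positivity)]
    nlinarith [mul_lt_mul_of_pos_left h4 (by positivity : (0:ℝ) < 2 * d₁ ^ 2)]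


lemma forward (b₁ b₂ c₁ c₂ : ℂ) (δ₁ δ₂ σ₁ σ₂ : ℝ)
    (hδ₁ : 0 ≤ δ₁) (hδ₂ : 0 ≤ δ₂) (hσ₁ : 0 ≤ σ₁) (hσ₂ : 0 ≤ σ₂)
    (hpos : IsPosMap (phi3 b₁ b₂ c₁ c₂ δ₁ δ₂ σ₁ σ₂)) :
    (‖b₁‖ + ‖c₁‖) * (‖b₂‖ + ‖c₂‖) ≤
      σ₁ * σ₂ + δ₁ * δ₂ := by
  by_contra hcon
  push_neg at hcon
  set e₁ : ℝ := ‖b₁‖ + ‖c₁‖ with he₁def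
  set e₂ : ℝ := ‖b₂‖ + ‖c₂‖ with he₂def
  have he₁0 : 0 ≤ e₁ := by positivity
  have he₂0 : 0 ≤ e₂ := by positivity
  have hprod : 0 < e₁ * e₂ := lt_of_le_of_lt (by positivity) hcon
  have he₁ : 0 < e₁ := by nlinarith [hprod]
  have he₂ : 0 < e₂ := by nlinarith [hprod]
  set M : ℝ := e₁ ^ 2 * e₂ ^ 2 - δ₁ ^ 2 * δ₂ ^ 2 - σ₁ ^ 2 * σ₂ ^ 2 with hMdef
  have hM : 2 * (δ₁ * σ₁) * (δ₂ * σ₂) < M := by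
    have hsum : 0 < e₁ * e₂ + (σ₁ * σ₂ + δ₁ * δ₂) := by nlinarith
    nlinarith [mul_pos (sub_pos.2 hcon) hsum]
  obtain ⟨av, bv, hav, hbv, hab⟩ := choose_ab (δ₁ * σ₁) (δ₂ * σ₂) M
    (by positivity) (by positivity) hM
  set s : ℝ := Real.sqrt av with hsdef
  set t : ℝ := Real.sqrt bv with htdef
  have hs2 : s ^ 2 = av := Real.sq_sqrt hav.le
  have ht2 : t ^ 2 = bv := Real.sq_sqrt hbv.le
  have hs0 : 0 < s := Real.sqrt_pos.2 hav
  have ht0 : 0 < t := Real.sqrt_pos.2 hbv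
  set A : ℝ := (e₁ ^ 2 + δ₁ ^ 2) * av + σ₂ ^ 2 * bv with hAdef
  set B : ℝ := (e₂ ^ 2 + δ₂ ^ 2) * bv + σ₁ ^ 2 * av with hBdef
  have hApos : 0 < A := by
    nlinarith [mul_pos (pow_pos he₁ 2) hav, mul_nonneg (sq_nonneg δ₁) hav.le, mul_nonneg (sq_nonneg σ₂) hbv.le]
  have hBpos : 0 < B := by
    nlinarith [mul_pos (pow_pos he₂ 2) hbv, mul_nonneg (sq_nonneg δ₂) hbv.le, mul_nonneg (sq_nonneg σ₁) hav.le]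
  set r₁ : ℝ := e₁ * s / A with hr₁def
  set r₂ : ℝ := e₂ * t / B with hr₂def
  obtain ⟨μ₁, hμ₁abs, hμ₁⟩ := key_phase b₁ c₁
  obtain ⟨μ₂, hμ₂abs, hμ₂⟩ := key_phase b₂ c₂
  set w₁ : ℂ := b₁ * μ₁ + c₁ * starRingEnd ℂ μ₁ with hw₁def
  set w₂ : ℂ := b₂ * μ₂ + c₂ * starRingEnd ℂ μ₂ with hw₂def
  have hμ₁unit : μ₁ * starRingEnd ℂ μ₁ = 1 := by
    rw [Complex.mul_conj]; norm_cast; rw [← Complex.sq_norm, hμ₁abs]; norm_num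
  have hμ₂unit : μ₂ * starRingEnd ℂ μ₂ = 1 := by
    rw [Complex.mul_conj]; norm_cast; rw [← Complex.sq_norm, hμ₂abs]; norm_num
  have hw₁c : w₁ * starRingEnd ℂ w₁ = ((e₁ : ℝ) : ℂ) ^ 2 := by
    rw [Complex.mul_conj]; norm_cast; rw [← Complex.sq_norm, hμ₁]
  have hw₂c : w₂ * starRingEnd ℂ w₂ = ((e₂ : ℝ) : ℂ) ^ 2 := by
    rw [Complex.mul_conj]; norm_cast; rw [← Complex.sq_norm, hμ₂]
  set η : Fin 3 → ℂ := ![(s : ℂ) * μ₁, (t : ℂ) * μ₂, 1] with hηdef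
  set X : Matrix (Fin 3) (Fin 3) ℂ := Matrix.vecMulVec η (star η) with hXdef
  have hXij : ∀ i j, X i j = η i * starRingEnd ℂ (η j) := fun i j => by
    simp [hXdef, Matrix.vecMulVec_apply, Complex.star_def]
  have hη0 : η 0 = (s : ℂ) * μ₁ := rfl
  have hη1 : η 1 = (t : ℂ) * μ₂ := rfl
  have hη2 : η 2 = 1 := rfl
  have hsc : ((s : ℂ)) * (s : ℂ) = ((av : ℝ) : ℂ) := by
    norm_cast; rw [← hs2]; ring
  have htc : ((t : ℂ)) * (t : ℂ) = ((bv : ℝ) : ℂ) := by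
    norm_cast; rw [← ht2]; ring
  have E00 : X 0 0 = ((av : ℝ) : ℂ) := by
    rw [hXij, hη0]
    simp only [_root_.map_mul, Complex.conj_ofReal]
    linear_combination ((s:ℂ) * (s:ℂ)) * hμ₁unit + hsc
  have E11 : X 1 1 = ((bv : ℝ) : ℂ) := by
    rw [hXij, hη1]
    simp only [_root_.map_mul, Complex.conj_ofReal]
    linear_combination ((t:ℂ) * (t:ℂ)) * hμ₂unit + htc
  have E22 : X 2 2 = 1 := by rw [hXij, hη2]; simp
  have E02 : X 0 2 = (s : ℂ) * μ₁ := by rw [hXij, hη0, hη2]; simp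
  have E20 : X 2 0 = (s : ℂ) * starRingEnd ℂ μ₁ := by
    rw [hXij, hη2, hη0]
    simp only [_root_.map_mul, Complex.conj_ofReal, one_mul]
  have E12 : X 1 2 = (t : ℂ) * μ₂ := by rw [hXij, hη1, hη2]; simp
  have E21 : X 2 1 = (t : ℂ) * starRingEnd ℂ μ₂ := by
    rw [hXij, hη2, hη1]
    simp only [_root_.map_mul, Complex.conj_ofReal, one_mul]
  have hconjw₁ : starRingEnd ℂ w₁ = starRingEnd ℂ b₁ * starRingEnd ℂ μ₁ + starRingEnd ℂ c₁ * μ₁ := by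
    rw [hw₁def]; simp only [map_add, _root_.map_mul, Complex.conj_conj]
  have hconjw₂ : starRingEnd ℂ w₂ = starRingEnd ℂ b₂ * starRingEnd ℂ μ₂ + starRingEnd ℂ c₂ * μ₂ := by
    rw [hw₂def]; simp only [map_add, _root_.map_mul, Complex.conj_conj]
  set y : Fin 3 → ℂ := ![-(r₁ : ℂ) * w₁ / (e₁ : ℂ), -(r₂ : ℂ) * w₂ / (e₂ : ℂ), 1] with hydef
  have hy0 : y 0 = -(r₁ : ℂ) * w₁ / (e₁ : ℂ) := rfl
  have hy1 : y 1 = -(r₂ : ℂ) * w₂ / (e₂ : ℂ) := rfl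
  have hy2 : y 2 = 1 := rfl
  have he₁c : ((e₁ : ℝ) : ℂ) ≠ 0 := by exact_mod_cast he₁.ne'
  have he₂c : ((e₂ : ℝ) : ℂ) ≠ 0 := by exact_mod_cast he₂.ne'
  have hyy0 : starRingEnd ℂ (y 0) * y 0 = ((r₁ ^ 2 : ℝ) : ℂ) := by
    rw [hy0]
    simp only [map_div₀, map_neg, _root_.map_mul, Complex.conj_ofReal]
    field_simp
    push_cast
    linear_combination ((r₁:ℂ) * (r₁:ℂ)) * hw₁c
  have hyy1 : starRingEnd ℂ (y 1) * y 1 = ((r₂ ^ 2 : ℝ) : ℂ) := by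
    rw [hy1]
    simp only [map_div₀, map_neg, _root_.map_mul, Complex.conj_ofReal]
    field_simp
    push_cast
    linear_combination ((r₂:ℂ) * (r₂:ℂ)) * hw₂c
  have hyy2 : starRingEnd ℂ (y 2) * y 2 = 1 := by rw [hy2]; simp
  have hcr0 : (b₁ * X 0 2 + c₁ * X 2 0) * (starRingEnd ℂ (y 0) * y 2) =
      -((e₁ * s * r₁ : ℝ) : ℂ) := by
    rw [E02, E20, hy0, hy2]
    simp only [map_div₀, map_neg, _root_.map_mul, Complex.conj_ofReal]
    field_simp
    push_cast
    linear_combination (-((s:ℂ) * (r₁:ℂ))) * hw₁c + (2 * (s:ℂ) * (r₁:ℂ) * starRingEnd ℂ w₁) * hw₁def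
  have hcr0' : (starRingEnd ℂ b₁ * X 2 0 + starRingEnd ℂ c₁ * X 0 2) *
      (starRingEnd ℂ (y 2) * y 0) = -((e₁ * s * r₁ : ℝ) : ℂ) := by
    have C0' : starRingEnd ℂ b₁ * X 2 0 + starRingEnd ℂ c₁ * X 0 2 =
        (s : ℂ) * starRingEnd ℂ w₁ := by
      rw [E02, E20, hconjw₁]; ring
    rw [C0', hy0, hy2]
    simp only [map_div₀, map_neg, _root_.map_mul, Complex.conj_ofReal, _root_.map_one]
    field_simp
    push_cast
    linear_combination (-((s:ℂ) * (r₁:ℂ))) * hw₁c + (2 * (s:ℂ) * (r₁:ℂ) * starRingEnd ℂ w₁) * hw₁def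
  have hcr1 : (b₂ * X 1 2 + c₂ * X 2 1) * (starRingEnd ℂ (y 1) * y 2) =
      -((e₂ * t * r₂ : ℝ) : ℂ) := by
    rw [E12, E21, hy1, hy2]
    simp only [map_div₀, map_neg, _root_.map_mul, Complex.conj_ofReal]
    field_simp
    push_cast
    linear_combination (-((t:ℂ) * (r₂:ℂ))) * hw₂c + (2 * (t:ℂ) * (r₂:ℂ) * starRingEnd ℂ w₂) * hw₂def
  have hcr1' : (starRingEnd ℂ b₂ * X 2 1 + starRingEnd ℂ c₂ * X 1 2) *
      (starRingEnd ℂ (y 2) * y 1) = -((e₂ * t * r₂ : ℝ) : ℂ) := by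
    have C1' : starRingEnd ℂ b₂ * X 2 1 + starRingEnd ℂ c₂ * X 1 2 =
        (t : ℂ) * starRingEnd ℂ w₂ := by
      rw [E12, E21, hconjw₂]; ring
    rw [C1', hy1, hy2]
    simp only [map_div₀, map_neg, _root_.map_mul, Complex.conj_ofReal, _root_.map_one]
    field_simp
    push_cast
    linear_combination (-((t:ℂ) * (r₂:ℂ))) * hw₂c + (2 * (t:ℂ) * (r₂:ℂ) * starRingEnd ℂ w₂) * hw₂def
  have h := (hpos X (vecMulVec_posSemidef η)).dotProduct_mulVec_nonneg y
  rw [quad_eq] at h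
  rw [E00, E11, E22, hyy0, hyy1, hyy2, hcr0, hcr0', hcr1, hcr1'] at h
  have hQval : (((e₁ ^ 2 + δ₁ ^ 2 : ℝ) : ℂ) * ((av : ℝ) : ℂ) +
        ((σ₂ ^ 2 : ℝ) : ℂ) * ((bv : ℝ) : ℂ)) * ((r₁ ^ 2 : ℝ) : ℂ) +
      (((e₂ ^ 2 + δ₂ ^ 2 : ℝ) : ℂ) * ((bv : ℝ) : ℂ) +
        ((σ₁ ^ 2 : ℝ) : ℂ) * ((av : ℝ) : ℂ)) * ((r₂ ^ 2 : ℝ) : ℂ) +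
      1 * 1 + -((e₁ * s * r₁ : ℝ) : ℂ) + -((e₁ * s * r₁ : ℝ) : ℂ) +
      -((e₂ * t * r₂ : ℝ) : ℂ) + -((e₂ * t * r₂ : ℝ) : ℂ) =
      ((A * r₁ ^ 2 + B * r₂ ^ 2 + 1 - 2 * (e₁ * s * r₁) - 2 * (e₂ * t * r₂) : ℝ) : ℂ) := by
    rw [hAdef, hBdef]; push_cast; ring
  rw [hQval, Complex.zero_le_real] at h
  -- real contradiction
  have hr : A * r₁ = e₁ * s := by rw [hr₁def]; field_simp
  have hw : B * r₂ = e₂ * t := by rw [hr₂def]; field_simp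
  have h2 : A * r₁ ^ 2 = e₁ * s * r₁ := by linear_combination r₁ * hr
  have h2' : B * r₂ ^ 2 = e₂ * t * r₂ := by linear_combination r₂ * hw
  have h1 : e₁ * s * r₁ + e₂ * t * r₂ ≤ 1 := by linarith
  have hL1 : e₁ * s * r₁ = e₁ ^ 2 * av / A := by
    rw [hr₁def, ← hs2]; field_simp
  have hL2 : e₂ * t * r₂ = e₂ ^ 2 * bv / B := by
    rw [hr₂def, ← ht2]; field_simp
  have h4 : e₁ * s * r₁ + e₂ * t * r₂ = (e₁ ^ 2 * av * B + e₂ ^ 2 * bv * A) / (A * B) := by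
    rw [hL1, hL2]
    field_simp
  have h3 : e₁ ^ 2 * av * B + e₂ ^ 2 * bv * A ≤ A * B := by
    rw [h4] at h1
    exact (div_le_one (by positivity)).1 h1
  have hiden : A * B - e₁ ^ 2 * av * B - e₂ ^ 2 * bv * A =
      (δ₁ * σ₁) ^ 2 * av ^ 2 + (δ₂ * σ₂) ^ 2 * bv ^ 2 - M * av * bv := by
    rw [hAdef, hBdef, hMdef]; ring
  linarith [h3, hab, hiden]


end Statement15Aux

/-- The map `phi3` is positive iff `σ₁σ₂ + δ₁δ₂ ≥ ε₁ε₂`. -/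
theorem statement15 (b₁ b₂ c₁ c₂ : ℂ) (δ₁ δ₂ σ₁ σ₂ : ℝ)
    (hδ₁ : 0 ≤ δ₁) (hδ₂ : 0 ≤ δ₂) (hσ₁ : 0 ≤ σ₁) (hσ₂ : 0 ≤ σ₂) :
    IsPosMap (phi3 b₁ b₂ c₁ c₂ δ₁ δ₂ σ₁ σ₂) ↔
      (‖b₁‖ + ‖c₁‖) * (‖b₂‖ + ‖c₂‖) ≤
        σ₁ * σ₂ + δ₁ * δ₂ := by
  constructor
  · exact forward b₁ b₂ c₁ c₂ δ₁ δ₂ σ₁ σ₂ hδ₁ hδ₂ hσ₁ hσ₂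
  · exact backward b₁ b₂ c₁ c₂ δ₁ δ₂ σ₁ σ₂ hδ₁ hδ₂ hσ₁ hσ₂

end Paper
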